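/- Let α > 1, k > 0, and let φ : [0,∞) → [0,∞) be increasing, differentiable, with φ(0) = 0, φ'(s)²(1 + α²k²φ(s)^{2α-2}) = 1 for all s ≥ 0, and lim_{s→∞} φ(s) = ∞. Then lim_{s→∞} s^{-1/α} φ(s) = k^{-1/α}. -/

import Mathlib

open Real Filter Set

/-- If `f` is differentiable and `deriv f → L` at infinity, then `f s / s → L`. -/
lemma aux_tendsto_div_self {f : ℝ → ℝ} {L : ℝ} (hf : Differentiable ℝ f)
    (hd : Tendsto (deriv f) atTop (nhds L)) :
    Tendsto (fun s => f s / s) atTop (nhds L) := by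
  rw [Metric.tendsto_atTop]
  intro ε hε
  have hε2 : 0 < ε / 2 := by positivity
  obtain ⟨S₀, hS₀⟩ := (Metric.tendsto_atTop.1 hd) (ε / 2) hε2
  set S := max S₀ 0 with hS
  have hSnn : 0 ≤ S := le_max_right _ _
  have hbound : ∀ s ≥ S, |f s - f S - L * (s - S)| ≤ ε / 2 * (s - S) := by
    intro s hs
    set g : ℝ → ℝ := fun x => f x - L * x with hg
    have hgd : ∀ x ∈ Icc S s, HasDerivWithinAt g (deriv f x - L) (Icc S s) x := by
      intro x hx
      exact (((hf x).hasDerivAt.sub ((hasDerivAt_id x).const_mul L)).hasDerivWithinAt).congr_deriv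
        (by ring)
    have hb : ∀ x ∈ Ico S s, ‖deriv f x - L‖ ≤ ε / 2 := by
      intro x hx
      have := hS₀ x (le_trans (le_max_left _ _) hx.1)
      rw [Real.dist_eq] at this
      exact le_of_lt this
    have h7 := norm_image_sub_le_of_norm_deriv_le_segment' hgd hb s ⟨hs, le_refl s⟩
    have h8 : f s - f S - L * (s - S) = g s - g S := by simp only [hg]; ring
    rw [h8]
    calc |g s - g S| = ‖g s - g S‖ := (Real.norm_eq_abs _).symm
      _ ≤ ε / 2 * (s - S) := h7
  set C := |f S - L * S| with hC
  set N := max (max S 1) (2 * C / ε + 1) with hN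
  refine ⟨N, fun s hsN => ?_⟩
  have hsS : S ≤ s := le_trans (le_trans (le_max_left _ _) (le_max_left _ _)) hsN
  have hs1 : (1 : ℝ) ≤ s := le_trans (le_trans (le_max_right _ _) (le_max_left _ _)) hsN
  have hspos : 0 < s := lt_of_lt_of_le one_pos hs1
  have hsC : 2 * C / ε + 1 ≤ s := le_trans (le_max_right _ _) hsN
  have key : |f s - L * s| ≤ ε / 2 * s + C := by
    have h1 := hbound s hsS
    have h2 : f s - L * s = (f s - f S - L * (s - S)) + (f S - L * S) := by ring
    calc |f s - L * s| ≤ |f s - f S - L * (s - S)| + |f S - L * S| := by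
          rw [h2]; exact abs_add_le _ _
      _ ≤ ε / 2 * (s - S) + C := by rw [hC]; gcongr
      _ ≤ ε / 2 * s + C := by nlinarith
  have hCs : C < ε / 2 * s := by
    have : 2 * C / ε < s := by linarith
    rw [div_lt_iff₀ hε] at this
    nlinarith
  rw [Real.dist_eq]
  have h9 : f s / s - L = (f s - L * s) / s := by field_simp
  rw [h9, abs_div, abs_of_pos hspos, div_lt_iff₀ hspos]
  calc |f s - L * s| ≤ ε / 2 * s + C := key
    _ < ε / 2 * s + ε / 2 * s := by linarith
    _ = ε * s := by ring

theorem stmt1 (α k : ℝ) (hα : 1 < α) (hk : 0 < k) (φ : ℝ → ℝ)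
    (hφmap : ∀ s ≥ 0, 0 ≤ φ s)
    (hmono : StrictMonoOn φ (Set.Ici 0))
    (hdiff : Differentiable ℝ φ)
    (h0 : φ 0 = 0)
    (hODE : ∀ s ≥ 0, (deriv φ s) ^ 2 * (1 + α ^ 2 * k ^ 2 * (φ s) ^ (2 * α - 2)) = 1)
    (hinf : Tendsto φ atTop atTop) :
    Tendsto (fun s : ℝ => s ^ (-(1 / α)) * φ s) atTop (nhds (k ^ (-(1 / α)))) := by
  have hαpos : (0 : ℝ) < α := lt_trans one_pos hα
  -- auxiliary function g
  set g : ℝ → ℝ := fun s => 1 + α ^ 2 * k ^ 2 * (φ s) ^ (2 * α - 2) with hgdef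
  have hgpos : ∀ s ≥ 0, 0 < g s := by
    intro s hs
    have h1 : (0:ℝ) ≤ (φ s) ^ (2 * α - 2) := Real.rpow_nonneg (hφmap s hs) _
    have : (0:ℝ) ≤ α ^ 2 * k ^ 2 * (φ s) ^ (2 * α - 2) := by positivity
    simp only [hgdef]; linarith
  -- deriv φ is nonnegative for s > 0
  have hderiv_nonneg : ∀ s > 0, 0 ≤ deriv φ s := by
    intro s hs
    have hda := (hdiff s).hasDerivAt
    rw [hasDerivAt_iff_tendsto_slope] at hda
    refine ge_of_tendsto hda ?_
    have hpos : ∀ᶠ y in nhdsWithin s {s}ᶜ, 0 < y :=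
      ((eventually_gt_nhds hs).filter_mono nhdsWithin_le_nhds)
    filter_upwards [hpos, self_mem_nhdsWithin] with y hy hy'
    rw [slope_def_field]
    rcases lt_or_gt_of_ne (hy' : y ≠ s) with h | h
    · rw [div_nonneg_iff]
      right
      constructor
      · have := hmono (le_of_lt hy) (le_of_lt hs) h
        linarith
      · linarith
    · apply div_nonneg
      · have := hmono (le_of_lt hs) (le_of_lt hy) h
        linarith
      · linarith
  -- formula for deriv φ
  have hderiv : ∀ s > 0, deriv φ s = Real.sqrt (1 / g s) := by
    intro s hs
    have hsq : (deriv φ s) ^ 2 = 1 / g s := by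
      rw [eq_div_iff (hgpos s (le_of_lt hs)).ne']
      exact hODE s (le_of_lt hs)
    rw [← hsq, Real.sqrt_sq (hderiv_nonneg s hs)]
  -- the function h := k * φ ^ α
  set h : ℝ → ℝ := fun s => k * (φ s) ^ α with hhdef
  have hhD : ∀ s, HasDerivAt h (k * (α * (φ s) ^ (α - 1) * deriv φ s)) s := by
    intro s
    have h1 : HasDerivAt (fun x : ℝ => x ^ α) (α * (φ s) ^ (α - 1)) (φ s) :=
      Real.hasDerivAt_rpow_const (Or.inr (le_of_lt hα))
    have h2 : HasDerivAt (fun s => (φ s) ^ α) (α * (φ s) ^ (α - 1) * deriv φ s) s :=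
      h1.comp s (hdiff s).hasDerivAt
    exact h2.const_mul k
  have hhdiff : Differentiable ℝ h := fun s => (hhD s).differentiableAt
  have hhderiv : ∀ s, deriv h s = k * (α * (φ s) ^ (α - 1) * deriv φ s) :=
    fun s => (hhD s).deriv
  -- the map ψ and its limit
  set ψ : ℝ → ℝ := fun x => k * α * x ^ (α - 1) / Real.sqrt (1 + α ^ 2 * k ^ 2 * x ^ (2 * α - 2))
    with hψdef
  set u : ℝ → ℝ := fun x => k * α * x ^ (α - 1) with hudef
  have hu_top : Tendsto u atTop atTop := by
    apply Tendsto.const_mul_atTop (by positivity : (0:ℝ) < k * α)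
    exact tendsto_rpow_atTop (by linarith)
  set v : ℝ → ℝ := fun t => t / Real.sqrt (1 + t ^ 2) with hvdef
  have hv : Tendsto v atTop (nhds 1) := by
    have h1 : Tendsto (fun t : ℝ => 1 - 1 / (1 + t ^ 2)) atTop (nhds 1) := by
      have h2 : Tendsto (fun t : ℝ => 1 + t ^ 2) atTop atTop := by
        apply tendsto_atTop_add_const_left
        exact tendsto_pow_atTop (two_ne_zero)
      have h3 : Tendsto (fun t : ℝ => 1 / (1 + t ^ 2)) atTop (nhds 0) := by
        simp only [one_div]
        exact h2.inv_tendsto_atTop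
      have := (tendsto_const_nhds (x := (1:ℝ)) (f := atTop)).sub h3
      simpa using this
    have h4 : Tendsto (fun t : ℝ => Real.sqrt (1 - 1 / (1 + t ^ 2))) atTop (nhds 1) := by
      have := (Real.continuous_sqrt.continuousAt (x := (1:ℝ))).tendsto.comp h1
      simpa [Function.comp_def] using this
    apply h4.congr'
    filter_upwards [eventually_gt_atTop (0:ℝ)] with t ht
    have h5 : (0:ℝ) < 1 + t ^ 2 := by positivity
    have h6 : 1 - 1 / (1 + t ^ 2) = t ^ 2 / (1 + t ^ 2) := by field_simp; ring
    rw [h6, Real.sqrt_div (by positivity), Real.sqrt_sq (le_of_lt ht)]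
  have hψ : Tendsto ψ atTop (nhds 1) := by
    apply (hv.comp hu_top).congr'
    filter_upwards [eventually_gt_atTop (0:ℝ)] with x hx
    have hx' : (0:ℝ) ≤ x := le_of_lt hx
    have key : 1 + (u x) ^ 2 = 1 + α ^ 2 * k ^ 2 * x ^ (2 * α - 2) := by
      have : (x ^ (α - 1)) ^ 2 = x ^ (2 * α - 2) := by
        rw [← Real.rpow_natCast (x ^ (α - 1)) 2, ← Real.rpow_mul hx']
        norm_num
        ring_nf
      simp only [hudef]
      rw [mul_pow, mul_pow, this]
      ring
    simp only [Function.comp_apply, hvdef, hψdef, hudef] at *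
    rw [key]
  -- deriv h tends to 1
  have hdh : Tendsto (deriv h) atTop (nhds 1) := by
    apply (hψ.comp hinf).congr'
    have hφtop : ∀ᶠ s in atTop, (0:ℝ) < s := eventually_gt_atTop 0
    filter_upwards [hφtop] with s hs
    have hφs : 0 ≤ φ s := hφmap s (le_of_lt hs)
    have hgs := hgpos s (le_of_lt hs)
    rw [Function.comp_apply, hhderiv s, hderiv s hs]
    simp only [hψdef, hgdef]
    rw [one_div, Real.sqrt_inv]
    field_simp
  -- h s / s → 1
  have hhs : Tendsto (fun s => h s / s) atTop (nhds 1) := aux_tendsto_div_self hhdiff hdh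
  -- divide by k and take rpow
  have hdivk : Tendsto (fun s => h s / s / k) atTop (nhds (1 / k)) := hhs.div_const k
  have hrpow : Tendsto (fun s => (h s / s / k) ^ (1 / α)) atTop (nhds ((1 / k) ^ (1 / α))) :=
    hdivk.rpow_const (Or.inl (by positivity))
  have hfinal : (1 / k : ℝ) ^ (1 / α) = k ^ (-(1 / α)) := by
    rw [one_div, Real.inv_rpow (le_of_lt hk), ← Real.rpow_neg (le_of_lt hk)]
  rw [← hfinal]
  apply hrpow.congr'
  filter_upwards [eventually_gt_atTop (0:ℝ)] with s hs
  have hφs : 0 ≤ φ s := hφmap s (le_of_lt hs)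
  have hks : h s / s / k = (φ s) ^ α * s⁻¹ := by
    simp only [hhdef]
    field_simp
  rw [hks, Real.mul_rpow (Real.rpow_nonneg hφs α) (inv_nonneg.2 (le_of_lt hs)),
    ← Real.rpow_mul hφs, mul_one_div, div_self (ne_of_gt hαpos), Real.rpow_one,
    Real.inv_rpow (le_of_lt hs), ← Real.rpow_neg (le_of_lt hs)]
  ring
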